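/- Let a, b > 0, ν ∈ (0,1), h = b/a, r = min{ν, 1-ν}, R = max{ν, 1-ν}, r' = min{2r, 1-2r}, and K(t) = (1+t)²/(4t). Then (1-ν)a + νb − R(√a − √b)² ≤ K(√h)^{-r'} · a^(1-ν) b^ν. -/

import Mathlib

open Real Finset

noncomputable def Kc (t : ℝ) : ℝ := (1 + t)^2 / (4 * t)

noncomputable def rseq (ν : ℝ) : ℕ → ℝ
  | 0 => min ν (1 - ν)
  | k + 1 => min (2 * rseq ν k) (1 - 2 * rseq ν k)

noncomputable def mfl (ν : ℝ) (k : ℕ) : ℝ := ⌊(2:ℝ)^k * ν⌋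

lemma Kc_pos {t : ℝ} (ht : 0 < t) : 0 < Kc t := by
  have h1 : 0 < 1 + t := by linarith
  unfold Kc; positivity

lemma Kc_inv {t : ℝ} (ht : 0 < t) : Kc (1/t) = Kc t := by
  unfold Kc; field_simp; ring

lemma ZSF {x y μ : ℝ} (hx : 0 < x) (hy : 0 < y) (hμ0 : 0 ≤ μ) (hμ : μ ≤ 1/2) :
    Kc (y/x) ^ μ * (x ^ (1-μ) * y ^ μ) ≤ (1-μ)*x + μ*y := by
  have hh0 : 0 < y / x := div_pos hy hx
  set h := y / x with hhdef
  have hs : (0:ℝ) < (1+h)/2 := by positivity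
  have hy' : y = x * h := by rw [hhdef]; field_simp [hx.ne']
  have hid : Kc h ^ μ * (x ^ (1-μ) * y ^ μ) = x * ((1+h)/2) ^ (2*μ) := by
    rw [hy', Real.mul_rpow hx.le hh0.le]
    have hx1 : x ^ (1-μ) * x ^ μ = x := by
      rw [← Real.rpow_add hx]; norm_num
    have hKh : Kc h * h = ((1+h)/2)^(2:ℕ) := by
      unfold Kc; field_simp; ring
    have hK : Kc h ^ μ * h ^ μ = ((1+h)/2) ^ (2*μ) := by
      rw [← Real.mul_rpow (Kc_pos hh0).le hh0.le, hKh,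
        ← Real.rpow_natCast ((1+h)/2) 2, ← Real.rpow_mul hs.le]
      norm_num
    calc Kc h ^ μ * (x ^ (1-μ) * (x ^ μ * h ^ μ))
        = (x ^ (1-μ) * x ^ μ) * (Kc h ^ μ * h ^ μ) := by ring
      _ = x * ((1+h)/2) ^ (2*μ) := by rw [hx1, hK]
  rw [hid]
  have hbern : ((1+h)/2) ^ (2*μ) ≤ 2*μ*((1+h)/2) + (1-2*μ) := by
    have := Real.geom_mean_le_arith_mean2_weighted (by linarith : (0:ℝ) ≤ 2*μ)
      (by linarith : (0:ℝ) ≤ 1-2*μ) hs.le (zero_le_one) (by ring)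
    simpa using this
  have := mul_le_mul_of_nonneg_left hbern hx.le
  calc x * ((1+h)/2) ^ (2*μ) ≤ x * (2*μ*((1+h)/2) + (1-2*μ)) := this
    _ = (1-μ)*x + μ*y := by rw [hy']; ring

lemma stepA {t ν r r' : ℝ} (ht : 0 < t) (hν0 : 0 < ν) (hν1 : ν < 1)
    (hr : r = min ν (1-ν)) (hr' : r' = min (2*r) (1-2*r)) :
    Kc t ^ r' * t ^ (2-2*ν) ≤ ν + (1-ν)*t^2 - r*(t-1)^2 := by
  have ht2 : (0:ℝ) < t^2 := by positivity
  rcases le_or_gt ν (1/2) with hc | hc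
  · have hrv : r = ν := by rw [hr]; exact min_eq_left (by linarith)
    rcases le_or_gt ν (1/4) with hc2 | hc2
    · -- r' = 2ν, ZSF with x = t^2, y = t, μ = 2ν
      have hrv' : r' = 2*ν := by rw [hr', hrv]; exact min_eq_left (by linarith)
      have h1 := ZSF ht2 ht (by linarith : (0:ℝ) ≤ 2*ν) (by linarith : 2*ν ≤ 1/2)
      have e1 : t / t^2 = 1/t := by field_simp
      have e2 : (t^2:ℝ) ^ (1-2*ν) * t ^ (2*ν) = t ^ (2-2*ν) := by
        rw [← Real.rpow_natCast t 2, ← Real.rpow_mul ht.le, ← Real.rpow_add ht]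
        norm_num; ring_nf
      rw [e1, Kc_inv ht, e2] at h1
      rw [hrv, hrv']
      calc Kc t ^ (2*ν) * t ^ (2-2*ν) ≤ (1-2*ν)*t^2 + 2*ν*t := h1
        _ = ν + (1-ν)*t^2 - ν*(t-1)^2 := by ring
    · -- r' = 1-2ν, ZSF with x = t, y = t^2, μ = 1-2ν
      have hrv' : r' = 1-2*ν := by rw [hr', hrv]; exact min_eq_right (by linarith)
      have h1 := ZSF ht ht2 (by linarith : (0:ℝ) ≤ 1-2*ν) (by linarith : 1-2*ν ≤ 1/2)
      have e1 : t^2 / t = t := by field_simp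
      have e2 : t ^ (1-(1-2*ν)) * (t^2:ℝ) ^ (1-2*ν) = t ^ (2-2*ν) := by
        rw [← Real.rpow_natCast t 2, ← Real.rpow_mul ht.le, ← Real.rpow_add ht]
        norm_num; ring_nf
      rw [e1, e2] at h1
      rw [hrv, hrv']
      calc Kc t ^ (1-2*ν) * t ^ (2-2*ν) ≤ (1-(1-2*ν))*t + (1-2*ν)*t^2 := h1
        _ = ν + (1-ν)*t^2 - ν*(t-1)^2 := by ring
  · have hrv : r = 1-ν := by rw [hr]; exact min_eq_right (by linarith)
    rcases le_or_gt ν (3/4) with hc2 | hc2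
    · -- r' = 2ν-1, ZSF with x = t, y = 1, μ = 2ν-1
      have hrv' : r' = 2*ν-1 := by rw [hr', hrv]; rw [min_eq_right (by linarith)]; ring_nf
      have h1 := ZSF ht one_pos (by linarith : (0:ℝ) ≤ 2*ν-1) (by linarith : 2*ν-1 ≤ 1/2)
      have e1 : (1:ℝ) / t = 1/t := rfl
      rw [Kc_inv ht] at h1
      have e2 : t ^ (1-(2*ν-1)) * (1:ℝ) ^ (2*ν-1) = t ^ (2-2*ν) := by
        rw [Real.one_rpow, mul_one]; ring_nf
      rw [e2] at h1
      rw [hrv, hrv']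
      calc Kc t ^ (2*ν-1) * t ^ (2-2*ν) ≤ (1-(2*ν-1))*t + (2*ν-1)*1 := h1
        _ = ν + (1-ν)*t^2 - (1-ν)*(t-1)^2 := by ring
    · -- r' = 2-2ν, ZSF with x = 1, y = t, μ = 2-2ν
      have hrv' : r' = 2-2*ν := by rw [hr', hrv]; rw [min_eq_left (by linarith)]; ring_nf
      have h1 := ZSF one_pos ht (by linarith : (0:ℝ) ≤ 2-2*ν) (by linarith : 2-2*ν ≤ 1/2)
      rw [div_one] at h1
      have e2 : (1:ℝ) ^ (1-(2-2*ν)) * t ^ (2-2*ν) = t ^ (2-2*ν) := by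
        rw [Real.one_rpow, one_mul]
      rw [e2] at h1
      rw [hrv, hrv']
      calc Kc t ^ (2-2*ν) * t ^ (2-2*ν) ≤ (1-(2-2*ν))*1 + (2-2*ν)*t := h1
        _ = ν + (1-ν)*t^2 - (1-ν)*(t-1)^2 := by ring

lemma master {t ν r R r' : ℝ} (ht : 0 < t) (hν0 : 0 < ν) (hν1 : ν < 1)
    (hr : r = min ν (1-ν)) (hR : R = max ν (1-ν)) (hr' : r' = min (2*r) (1-2*r)) :
    (1-ν) + ν*t^2 - R*(t-1)^2 ≤ Kc t ^ (-r') * t ^ (2*ν) := by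
  have hK := Kc_pos ht
  set u := Kc t ^ r' * t ^ (2-2*ν) with hu_def
  set v := Kc t ^ (-r') * t ^ (2*ν) with hv_def
  have hu : 0 < u := by positivity
  have hv : 0 < v := by positivity
  have huv : u * v = t^2 := by
    rw [hu_def, hv_def]
    have e1 : Kc t ^ r' * Kc t ^ (-r') = 1 := by
      rw [← Real.rpow_add hK]; simp
    have e2 : t ^ (2-2*ν) * t ^ (2*ν) = t^2 := by
      rw [← Real.rpow_add ht]
      norm_num
    calc Kc t ^ r' * t ^ (2-2*ν) * (Kc t ^ (-r') * t ^ (2*ν))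
        = (Kc t ^ r' * Kc t ^ (-r')) * (t ^ (2-2*ν) * t ^ (2*ν)) := by ring
      _ = t^2 := by rw [e1, e2, one_mul]
  have hsv : Real.sqrt u * Real.sqrt v = t := by
    rw [← Real.sqrt_mul hu.le, huv, Real.sqrt_sq ht.le]
  have hC : 2*t ≤ u + v := by
    nlinarith [sq_nonneg (Real.sqrt u - Real.sqrt v), Real.sq_sqrt hu.le, Real.sq_sqrt hv.le]
  have hA : u ≤ ν + (1-ν)*t^2 - r*(t-1)^2 := stepA ht hν0 hν1 hr hr'
  have hrR : r + R = 1 := by rw [hr, hR, min_add_max]; ring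
  have hRr : R = 1 - r := by linarith
  have hid : (1-ν) + ν*t^2 - R*(t-1)^2 = 2*t - (ν + (1-ν)*t^2 - r*(t-1)^2) := by
    rw [hRr]; ring
  linarith

theorem stmt3 (a b ν : ℝ) (ha : 0 < a) (hb : 0 < b) (hν : ν ∈ Set.Ioo (0:ℝ) 1)
    (h : ℝ) (hh : h = b / a) (r R r' : ℝ) (hr : r = min ν (1 - ν)) (hR : R = max ν (1 - ν))
    (hr' : r' = min (2*r) (1 - 2*r)) :
    (1 - ν) * a + ν * b - R * (Real.sqrt a - Real.sqrt b)^2 ≤ Kc (Real.sqrt h) ^ (-r') * (a ^ (1 - ν) * b ^ ν) := by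
  obtain ⟨hν0, hν1⟩ := hν
  have hha : 0 < h := by rw [hh]; positivity
  set t := Real.sqrt h with htdef
  have ht : 0 < t := Real.sqrt_pos.2 hha
  have ht2 : t^2 = b/a := by rw [htdef, Real.sq_sqrt hha.le, hh]
  have hb' : b = a * t^2 := by rw [ht2]; field_simp
  have hsb : Real.sqrt b = Real.sqrt a * t := by
    rw [hb', Real.sqrt_mul ha.le, Real.sqrt_sq ht.le]
  have hsq : (Real.sqrt a - Real.sqrt b)^2 = a * (t-1)^2 := by
    rw [hsb]
    have := Real.sq_sqrt ha.le
    nlinarith [this]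
  have hprod : a ^ (1-ν) * b ^ ν = a * t ^ (2*ν) := by
    rw [hb', Real.mul_rpow ha.le (by positivity : (0:ℝ) ≤ t^2)]
    have e1 : a ^ (1-ν) * a ^ ν = a := by
      rw [← Real.rpow_add ha]; norm_num
    have e2 : (t^2:ℝ) ^ ν = t ^ (2*ν) := by
      rw [← Real.rpow_natCast t 2, ← Real.rpow_mul ht.le]; norm_num
    calc a ^ (1-ν) * (a ^ ν * (t^2:ℝ) ^ ν) = (a ^ (1-ν) * a ^ ν) * (t^2:ℝ) ^ ν := by ring
      _ = a * t ^ (2*ν) := by rw [e1, e2]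
  have hm := master ht hν0 hν1 hr hR hr'
  have := mul_le_mul_of_nonneg_left hm ha.le
  calc (1 - ν) * a + ν * b - R * (Real.sqrt a - Real.sqrt b)^2
      = a * ((1-ν) + ν*t^2 - R*(t-1)^2) := by rw [hsq, hb']; ring
    _ ≤ a * (Kc t ^ (-r') * t ^ (2*ν)) := this
    _ = Kc t ^ (-r') * (a ^ (1-ν) * b ^ ν) := by rw [hprod]; ring
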